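/- For every p ≥ 1 the identity ∇A(s)^p − A(s)^p∇ + pA(s)^{p−1} = (−1)^{k−1} (∂(A(s)^p)/∂s_k) · P'_s(A(s)) holds as matrices with entries in ℂ[s_1,…,s_k]. -/

import Mathlib

open Matrix MvPolynomial

noncomputable section

/-- The polynomial ring `ℂ[s_1, …, s_k]` realized as `MvPolynomial (Fin k) ℂ`:
the variable of index `i` is `s_{i+1}`. -/
abbrev SRing (k : ℕ) : Type := MvPolynomial (Fin k) ℂ

/-- The companion matrix `A(s)` of `P_s(z) = Σ_{h=0}^{k} (−1)^h s_h z^{k−h}` (with `s_0 = 1`),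
with entries in `ℂ[s_1, …, s_k]`: `A(s)_{i,i+1} = 1` for `1 ≤ i ≤ k−1` and the last row is
`((−1)^{k−1} s_k, …, s_1)`. -/
def LA (k : ℕ) : Matrix (Fin k) (Fin k) (SRing k) := fun i j =>
  if (i : ℕ) = k - 1 then
    (-1 : SRing k) ^ (k - 1 - (j : ℕ)) *
      MvPolynomial.X (⟨k - 1 - (j : ℕ), by have := j.isLt; omega⟩ : Fin k)
  else if (j : ℕ) = (i : ℕ) + 1 then 1 else 0

/-- The constant matrix `∇` with `∇_{i+1,i} = i` for `i = 1, …, k−1` and `0` elsewhere. -/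
def Lnabla (k : ℕ) : Matrix (Fin k) (Fin k) (SRing k) := fun i j =>
  if (i : ℕ) = (j : ℕ) + 1 then ((i : ℕ) : SRing k) else 0

/-- `P'_s(A(s)) = Σ_{h=0}^{k−1} (−1)^h (k−h) s_h A(s)^{k−h−1}` (with `s_0 = 1`). -/
def LPprimeA (k : ℕ) : Matrix (Fin k) (Fin k) (SRing k) :=
  (k : SRing k) • LA k ^ (k - 1) + ∑ i : Fin k,
    ((-1 : SRing k) ^ ((i : ℕ) + 1) * ((k - 1 - (i : ℕ) : ℕ) : SRing k) *
      MvPolynomial.X i) • LA k ^ (k - 2 - (i : ℕ))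

lemma row0_pow (k : ℕ) (hk : 2 ≤ k) (m : ℕ) (hm : m ≤ k - 1) (j : Fin k) :
    (LA k ^ m) ⟨0, by omega⟩ j = if (j : ℕ) = m then 1 else 0 := by
  induction m generalizing j with
  | zero =>
    rw [pow_zero]
    simp [Matrix.one_apply, Fin.ext_iff, eq_comm]
  | succ m ih =>
    rw [pow_succ, Matrix.mul_apply]
    rw [Finset.sum_eq_single (⟨m, by omega⟩ : Fin k)]
    · have h1 : ((⟨m, by omega⟩ : Fin k) : ℕ) = m := rfl
      rw [ih (by omega) _, h1, if_pos rfl, one_mul]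
      simp only [LA, h1]
      rw [if_neg (by omega)]
    · intro b _ hb
      rw [ih (by omega) b, if_neg (fun h => hb (Fin.ext h)), zero_mul]
    · simp

lemma Pprime_row0 (k : ℕ) (hk : 2 ≤ k) (j : Fin k) :
    LPprimeA k ⟨0, by omega⟩ j =
      if (j : ℕ) = k - 1 then (k : SRing k)
      else (-1 : SRing k) ^ (k - 1 - (j : ℕ)) * (((j : ℕ) + 1 : ℕ) : SRing k) *
        MvPolynomial.X (⟨k - 2 - (j : ℕ), by have := j.isLt; omega⟩ : Fin k) := by
  rw [LPprimeA, Matrix.add_apply, Matrix.smul_apply, Matrix.sum_apply,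
    row0_pow k hk (k-1) le_rfl j]
  by_cases hj : (j : ℕ) = k - 1
  · rw [if_pos hj, if_pos hj, smul_eq_mul, mul_one]
    rw [Finset.sum_eq_zero, add_zero]
    intro b _
    rw [Matrix.smul_apply, row0_pow k hk _ (by omega) j, if_neg (by omega), smul_zero]
  · rw [if_neg hj, if_neg hj, smul_eq_mul, mul_zero, zero_add]
    rw [Finset.sum_eq_single (⟨k - 2 - (j : ℕ), by have := j.isLt; omega⟩ : Fin k)]
    · have h1 : ((⟨k - 2 - (j : ℕ), by have := j.isLt; omega⟩ : Fin k) : ℕ) = k - 2 - (j:ℕ) := rfl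
      rw [Matrix.smul_apply, row0_pow k hk _ (by omega) j, h1,
        if_pos (by have := j.isLt; omega), smul_eq_mul, mul_one]
      have h2 : k - 2 - (j:ℕ) + 1 = k - 1 - (j:ℕ) := by have := j.isLt; omega
      have h3 : k - 1 - (k - 2 - (j:ℕ)) = (j:ℕ) + 1 := by have := j.isLt; omega
      rw [h2, h3]
    · intro b _ hb
      rw [Matrix.smul_apply, row0_pow k hk _ (by omega) j]
      by_cases hbj : (j : ℕ) = k - 2 - (b : ℕ)
      · have hb' : (b : ℕ) ≠ k - 2 - (j:ℕ) := fun h => hb (Fin.ext h)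
        have : k - 1 - (b : ℕ) = 0 := by have := b.isLt; have := j.isLt; omega
        rw [this, if_pos hbj, smul_eq_mul, mul_one, Nat.cast_zero, mul_zero, zero_mul]
      · rw [if_neg hbj, smul_zero]
    · simp

lemma map_pderiv_mul (k : ℕ) (v : Fin k) (M N : Matrix (Fin k) (Fin k) (SRing k)) :
    (M * N).map (fun q => pderiv v q) =
      M.map (fun q => pderiv v q) * N + M * N.map (fun q => pderiv v q) := by
  refine Matrix.ext fun i j => ?_
  simp only [Matrix.map_apply, Matrix.add_apply, Matrix.mul_apply, map_sum,
    ← Finset.sum_add_distrib]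
  exact Finset.sum_congr rfl fun l _ => pderiv_mul (i := v) (f := M i l) (g := N l j)

lemma pderiv_neg_one_pow (k : ℕ) (v : Fin k) (m : ℕ) :
    (pderiv v) ((-1 : SRing k) ^ m) = 0 := by
  have hC : ((-1 : SRing k) ^ m) = C ((-1 : ℂ) ^ m) := by simp
  rw [hC, pderiv_C]

lemma mapD_A (k : ℕ) (hk : 2 ≤ k) :
    (LA k).map (fun q => pderiv (⟨k - 1, Nat.sub_lt (by omega) one_pos⟩ : Fin k) q) =
      Matrix.of fun (i j : Fin k) =>
        if (i : ℕ) = k - 1 ∧ (j : ℕ) = 0 then (-1 : SRing k) ^ (k - 1) else 0 := by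
  refine Matrix.ext fun i j => ?_
  simp only [Matrix.map_apply, Matrix.of_apply, LA]
  by_cases hi : (i : ℕ) = k - 1
  · rw [if_pos hi, pderiv_mul, pderiv_neg_one_pow, zero_mul, zero_add, pderiv_X,
      Pi.single_apply]
    by_cases hj : (j : ℕ) = 0
    · rw [if_pos (Fin.ext (show k - 1 - (j:ℕ) = k - 1 by omega)), mul_one,
        if_pos ⟨hi, hj⟩, hj, Nat.sub_zero]
    · rw [if_neg (fun h => hj (by have := congrArg Fin.val h; simp only [] at this; omega)),
        mul_zero, if_neg (fun h => hj h.2)]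
  · rw [if_neg hi]
    have hni : ¬((i : ℕ) = k - 1 ∧ (j : ℕ) = 0) := fun h => hi h.1
    rw [if_neg hni]
    split <;> simp

lemma nablaA (k : ℕ) (hk : 2 ≤ k) (i j : Fin k) :
    (Lnabla k * LA k) i j = if (j : ℕ) = (i : ℕ) then ((i : ℕ) : SRing k) else 0 := by
  rw [Matrix.mul_apply]
  by_cases hi0 : (i : ℕ) = 0
  · rw [Finset.sum_eq_zero fun l _ => by rw [Lnabla]; rw [if_neg (by omega), zero_mul]]
    split_ifs <;> simp [hi0]
  · rw [Finset.sum_eq_single (⟨(i : ℕ) - 1, by have := i.isLt; omega⟩ : Fin k)]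
    · rw [Lnabla, LA]
      have hv : ((⟨(i : ℕ) - 1, by have := i.isLt; omega⟩ : Fin k) : ℕ) = (i : ℕ) - 1 := rfl
      rw [hv]
      have hik := i.isLt
      split_ifs <;> first | ring1 | (exfalso; omega)
    · intro b _ hb
      have hbv : (b : ℕ) ≠ (i : ℕ) - 1 := fun h => hb (Fin.ext h)
      rw [Lnabla]
      rw [if_neg (by omega), zero_mul]
    · simp

lemma Anabla (k : ℕ) (hk : 2 ≤ k) (i j : Fin k) :
    (LA k * Lnabla k) i j =
      if (i : ℕ) = k - 1 then
        (if (j : ℕ) = k - 1 then 0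
         else (-1 : SRing k) ^ (k - 2 - (j : ℕ)) *
            MvPolynomial.X (⟨k - 2 - (j : ℕ), by have := j.isLt; omega⟩ : Fin k) *
            (((j : ℕ) + 1 : ℕ) : SRing k))
      else (if (j : ℕ) = (i : ℕ) then (((i : ℕ) + 1 : ℕ) : SRing k) else 0) := by
  rw [Matrix.mul_apply]
  have hjk := j.isLt
  have hik := i.isLt
  by_cases hj : (j : ℕ) = k - 1
  · rw [Finset.sum_eq_zero fun l _ => by
      rw [Lnabla]; rw [if_neg (by have := l.isLt; omega), mul_zero]]
    split_ifs <;> first | rfl | (exfalso; omega)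
  · rw [Finset.sum_eq_single (⟨(j : ℕ) + 1, by omega⟩ : Fin k)]
    · rw [Lnabla, LA]
      have hv : ((⟨(j : ℕ) + 1, by omega⟩ : Fin k) : ℕ) = (j : ℕ) + 1 := rfl
      simp only [hv]
      have h2 : k - 1 - ((j : ℕ) + 1) = k - 2 - (j : ℕ) := by omega
      simp only [h2]
      split_ifs <;> first | ring1 | (exfalso; omega) | (rename_i hji; rw [one_mul, hji])
    · intro b _ hb
      have hbv : (b : ℕ) ≠ (j : ℕ) + 1 := fun h => hb (Fin.ext h)
      rw [Lnabla]
      rw [if_neg (by omega), mul_zero]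
    · simp

lemma base_case (k : ℕ) (hk : 2 ≤ k) :
    Lnabla k * LA k - LA k * Lnabla k + 1 =
      ((-1 : SRing k) ^ (k - 1)) •
        ((LA k).map (fun q => pderiv (⟨k - 1, Nat.sub_lt (by omega) one_pos⟩ : Fin k) q) * LPprimeA k) := by
  refine Matrix.ext fun i j => ?_
  rw [Matrix.add_apply, Matrix.sub_apply, Matrix.smul_apply, nablaA k hk, Anabla k hk,
    Matrix.one_apply, mapD_A k hk, Matrix.mul_apply]
  by_cases hi : (i : ℕ) = k - 1
  · rw [Finset.sum_eq_single (⟨0, by omega⟩ : Fin k)]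
    · have hc : (i : ℕ) = k - 1 ∧ ((⟨0, by omega⟩ : Fin k) : ℕ) = 0 := ⟨hi, rfl⟩
      rw [Matrix.of_apply, if_pos hc, Pprime_row0 k hk j, smul_eq_mul, ← mul_assoc,
        ← pow_add, Even.neg_one_pow ⟨k - 1, rfl⟩, one_mul, if_pos hi]
      by_cases hj : (j : ℕ) = k - 1
      · rw [if_pos hj, if_pos hj, if_pos (show (j:ℕ) = (i:ℕ) by omega),
          if_pos (Fin.ext (show (i:ℕ) = (j:ℕ) by omega)), sub_zero, hi,
          show ((k : ℕ) : SRing k) = ((k - 1 : ℕ) : SRing k) + 1 from by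
            exact_mod_cast (by omega : k = (k - 1) + 1)]
      · rw [if_neg hj, if_neg hj, if_neg (show ¬(j:ℕ) = (i:ℕ) by omega),
          if_neg (fun h : i = j => hj (by rw [← congrArg Fin.val h]; omega)),
          show k - 1 - (j : ℕ) = (k - 2 - (j : ℕ)) + 1 from by have := j.isLt; omega, pow_succ]
        ring1
    · intro b _ hb
      rw [Matrix.of_apply, if_neg (fun h => hb (Fin.ext h.2)), zero_mul]
    · simp
  · rw [Finset.sum_eq_zero fun l _ => by
      rw [Matrix.of_apply, if_neg (fun h => hi h.1), zero_mul], smul_zero, if_neg hi]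
    by_cases hji : (j : ℕ) = (i : ℕ)
    · rw [if_pos hji, if_pos hji, if_pos (Fin.ext hji.symm)]
      push_cast
      ring1
    · rw [if_neg hji, if_neg hji, if_neg (fun h : i = j => hji (congrArg Fin.val h).symm)]
      simp

lemma A_commP (k : ℕ) : LA k * LPprimeA k = LPprimeA k * LA k := by
  rw [LPprimeA, mul_add, add_mul, Finset.mul_sum, Finset.sum_mul]
  congr 1
  · rw [mul_smul_comm, smul_mul_assoc, ← pow_succ, ← pow_succ']
  · exact Finset.sum_congr rfl fun b _ => by
      rw [mul_smul_comm, smul_mul_assoc, ← pow_succ, ← pow_succ']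

set_option maxHeartbeats 1000000 in
theorem main (k : ℕ) (hk : 2 ≤ k) (p : ℕ) (hp : 1 ≤ p) :
    Lnabla k * LA k ^ p - LA k ^ p * Lnabla k + (p : SRing k) • LA k ^ (p - 1)
      = ((-1 : SRing k) ^ (k - 1)) •
          (((LA k ^ p).map (fun q => MvPolynomial.pderiv (⟨k - 1, Nat.sub_lt (by omega) one_pos⟩ : Fin k) q))
            * LPprimeA k) := by
  induction p, hp using Nat.le_induction with
  | base => simpa using base_case k hk
  | succ p hp ih =>
    have hpow : LA k ^ (p - 1) * LA k = LA k ^ p := by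
      rw [← pow_succ]
      congr 1
      omega
    have hb := base_case k hk
    have hcomm := A_commP k
    have e1 : (Lnabla k * LA k ^ p) * LA k = Lnabla k * LA k ^ (p + 1) := by
      rw [mul_assoc, ← pow_succ]
    have e2 : (LA k ^ p * Lnabla k) * LA k = LA k ^ p * (Lnabla k * LA k) := by
      rw [mul_assoc]
    have e3 : LA k ^ p * (LA k * Lnabla k) = LA k ^ (p + 1) * Lnabla k := by
      rw [← mul_assoc, ← pow_succ]
    calc Lnabla k * LA k ^ (p + 1) - LA k ^ (p + 1) * Lnabla k
          + ((p + 1 : ℕ) : SRing k) • LA k ^ (p + 1 - 1)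
        = (Lnabla k * LA k ^ p - LA k ^ p * Lnabla k + (p : SRing k) • LA k ^ (p - 1)) * LA k
            + LA k ^ p * (Lnabla k * LA k - LA k * Lnabla k + 1) := by
          rw [add_mul, sub_mul, smul_mul_assoc, hpow, mul_add, mul_sub, mul_one, e1, e2, e3]
          have hc : ((p + 1 : ℕ) : SRing k) = (p : SRing k) + 1 := by push_cast; ring
          rw [hc, add_smul, one_smul, Nat.add_sub_cancel]
          abel
      _ = (((-1 : SRing k) ^ (k - 1)) •
              (((LA k ^ p).map (fun q => MvPolynomial.pderiv (⟨k - 1, Nat.sub_lt (by omega) one_pos⟩ : Fin k) q))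
                * LPprimeA k)) * LA k
            + LA k ^ p * (((-1 : SRing k) ^ (k - 1)) •
              (((LA k).map (fun q => MvPolynomial.pderiv (⟨k - 1, Nat.sub_lt (by omega) one_pos⟩ : Fin k) q))
                * LPprimeA k)) := by rw [ih, hb]
      _ = ((-1 : SRing k) ^ (k - 1)) •
            (((LA k ^ (p + 1)).map (fun q => MvPolynomial.pderiv (⟨k - 1, Nat.sub_lt (by omega) one_pos⟩ : Fin k) q))
              * LPprimeA k) := by
          rw [smul_mul_assoc, mul_smul_comm, ← smul_add, pow_succ, map_pderiv_mul, add_mul]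
          refine congrArg (fun M => ((-1 : SRing k) ^ (k - 1)) • M) ?_
          rw [mul_assoc _ (LPprimeA k) (LA k), ← hcomm, ← mul_assoc, mul_assoc (LA k ^ p)]


/-- `∇A(s)^p − A(s)^p∇ + pA(s)^{p−1} = (−1)^{k−1} (∂(A(s)^p)/∂s_k)·P'_s(A(s))`
for every `p ≥ 1`, as matrices over `ℂ[s_1, …, s_k]`. -/
theorem nabla_companion_commutator_identity
    (k : ℕ) (hk : 2 ≤ k) (p : ℕ) (hp : 1 ≤ p) :
    Lnabla k * LA k ^ p - LA k ^ p * Lnabla k + (p : SRing k) • LA k ^ (p - 1)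
      = ((-1 : SRing k) ^ (k - 1)) •
          (((LA k ^ p).map (fun q => MvPolynomial.pderiv (⟨k - 1, by omega⟩ : Fin k) q))
            * LPprimeA k) := by
  exact main k hk p hp
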